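/- Let f be a polynomial with root multiset Z(f), let β ∉ Z(f), and let g(z) = (z−β)·f(z). Let τ be any root of g' and S_f(w) = Σ_{α∈Z(f)} 1/|w−α| (counting multiplicity). Then S_f(τ)·|β−τ| ≥ 1. -/

import Mathlib

open Complex Metric Polynomial

theorem stmt15 (f : ℂ[X]) (hf : 0 < f.natDegree) (β τ : ℂ) (hβ : f.eval β ≠ 0)
    (hτf : f.eval τ ≠ 0)
    (hτ : (Polynomial.derivative ((X - Polynomial.C β) * f)).eval τ = 0) :
    1 ≤ (f.roots.map (fun α => 1 / ‖τ - α‖)).sum * ‖β - τ‖ := by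
  classical
  set a := f.leadingCoeff with ha
  have hsplits : f.Splits := IsAlgClosed.splits f
  have hcard : Multiset.card f.roots = f.natDegree := splits_iff_card_roots.mp hsplits
  have hfeq : Polynomial.C a * (f.roots.map fun α => X - Polynomial.C α).prod = f :=
    C_leadingCoeff_mul_prod_multiset_X_sub_C hcard
  -- evaluation of f at τ
  have hfev : f.eval τ = a * (f.roots.map fun α => τ - α).prod := by
    conv_lhs => rw [← hfeq]
    simp [eval_multiset_prod, Multiset.map_map, Function.comp]
  have hne : ∀ α ∈ f.roots, τ - α ≠ 0 := by
    intro α hα h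
    have : τ = α := by linear_combination h
    exact hτf (this ▸ isRoot_of_mem_roots hα)
  -- derivative evaluation
  have hderiv : (Polynomial.derivative f).eval τ =
      a * (f.roots.map fun i => ((f.roots.erase i).map fun α => τ - α).prod).sum := by
    conv_lhs => rw [← hfeq]
    rw [derivative_mul, derivative_C, zero_mul, zero_add]
    rw [Polynomial.derivative_prod (s := f.roots) (f := fun α => X - Polynomial.C α)]
    rw [eval_mul, eval_C]
    congr 1
    rw [← Polynomial.coe_evalRingHom, map_multiset_sum, Multiset.map_map]
    refine congrArg Multiset.sum (Multiset.map_congr rfl fun i _ => ?_)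
    simp [eval_multiset_prod, Multiset.map_map, Function.comp]
  -- key bound : ‖f'(τ)‖ ≤ S * ‖f(τ)‖
  have hkey : ‖(Polynomial.derivative f).eval τ‖ ≤
      (f.roots.map (fun α => 1 / ‖τ - α‖)).sum * ‖f.eval τ‖ := by
    rw [hderiv, norm_mul]
    have hbound : ‖(f.roots.map fun i => ((f.roots.erase i).map fun α => τ - α).prod).sum‖ ≤
        ((f.roots.map fun i => ((f.roots.erase i).map fun α => τ - α).prod).map
          (fun z => ‖z‖)).sum := norm_multiset_sum_le _
    have heq : ∀ i ∈ f.roots,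
        ‖((f.roots.erase i).map fun α => τ - α).prod‖ =
          (1 / ‖τ - i‖) * ‖(f.roots.map fun α => τ - α).prod‖ := by
      intro i hi
      have : (τ - i) * ((f.roots.erase i).map fun α => τ - α).prod =
          (f.roots.map fun α => τ - α).prod := by
        rw [← Multiset.prod_cons, ← Multiset.map_cons, Multiset.cons_erase hi]
      have h0 : ‖τ - i‖ ≠ 0 := norm_ne_zero_iff.mpr (hne i hi)
      rw [← this, norm_mul, one_div, inv_mul_cancel_left₀ h0]
    calc ‖a‖ * ‖(f.roots.map fun i => ((f.roots.erase i).map fun α => τ - α).prod).sum‖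
        ≤ ‖a‖ * ((f.roots.map fun i => ((f.roots.erase i).map fun α => τ - α).prod).map
          (fun z => ‖z‖)).sum := by
          exact mul_le_mul_of_nonneg_left hbound (norm_nonneg a)
      _ = ‖a‖ * (f.roots.map fun i =>
          (1 / ‖τ - i‖) * ‖(f.roots.map fun α => τ - α).prod‖).sum := by
          rw [Multiset.map_map]
          congr 1
          exact congrArg Multiset.sum (Multiset.map_congr rfl heq)
      _ = (f.roots.map (fun α => 1 / ‖τ - α‖)).sum * ‖f.eval τ‖ := by
          rw [hfev, norm_mul]
          rw [Multiset.sum_map_mul_right]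
          ring
  -- the critical point relation
  have hrel : f.eval τ = (β - τ) * (Polynomial.derivative f).eval τ := by
    rw [derivative_mul] at hτ
    simp only [derivative_sub, derivative_X, derivative_C, sub_zero, one_mul, eval_add,
      eval_mul, eval_sub, eval_X, eval_C] at hτ
    linear_combination hτ
  have hnorm : ‖f.eval τ‖ = ‖β - τ‖ * ‖(Polynomial.derivative f).eval τ‖ := by
    rw [hrel, norm_mul]
  have hpos : 0 < ‖f.eval τ‖ := norm_pos_iff.mpr hτf
  have : ‖f.eval τ‖ ≤ (f.roots.map (fun α => 1 / ‖τ - α‖)).sum * ‖β - τ‖ * ‖f.eval τ‖ := by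
    calc ‖f.eval τ‖ = ‖β - τ‖ * ‖(Polynomial.derivative f).eval τ‖ := hnorm
      _ ≤ ‖β - τ‖ * ((f.roots.map (fun α => 1 / ‖τ - α‖)).sum * ‖f.eval τ‖) :=
          mul_le_mul_of_nonneg_left hkey (norm_nonneg _)
      _ = (f.roots.map (fun α => 1 / ‖τ - α‖)).sum * ‖β - τ‖ * ‖f.eval τ‖ := by ring
  nlinarith [this, hpos]
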